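/- arXiv:1212.1713 — 4 statements merged into one kernel-verified Lean document; each statement's English description precedes it below -/
import Mathlib

section
/- Let Ω ⊆ ℝ³ be open, and let ρ : Ω → ℝ with ρ > 0, u = (u₁,u₂,u₃) : Ω → ℝ³ with u₁ > 0, and φ : Ω → ℝ be C¹ functions satisfying the steady Euler–Poisson continuity equation ∂₁(ρu₁)+∂₂(ρu₂)+∂₃(ρu₃) = 0 and momentum equations ∂₁(ρu_iu₁)+∂₂(ρu_iu₂)+∂₃(ρu_iu₃)+∂_i(p(ρ)) = ρ∂_iφ for i = 1,2,3. Set s = ln ρ, β₂ = u₂/u₁, β₃ = u₃/u₁, c²(ρ) = p'(ρ), and B = ½(u₁²+u₂²+u₃²) + h(ρ) − φ. Then the following four equations hold on Ω: (i) ∂₁s + β₂∂₂s + β₃∂₃s − (c²(ρ)/u₁²)∂₁s + ∂₂β₂ + ∂₃β₃ = −(1/u₁²)∂₁φ; (ii) ∂₁β₂ + β₂∂₂β₂ + β₃∂₃β₂ − (c²(ρ)/u₁²)β₂∂₁s + (c²(ρ)/u₁²)∂₂s + (β₂/u₁²)∂₁φ − (1/u₁²)∂₂φ = 0; (iii) ∂₁β₃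 + β₂∂₂β₃ + β₃∂₃β₃ − (c²(ρ)/u₁²)β₃∂₁s + (c²(ρ)/u₁²)∂₃s + (β₃/u₁²)∂₁φ − (1/u₁²)∂₃φ = 0; (iv) ∂₁B + β₂∂₂B + β₃∂₃B = 0. -/
open Real Set MeasureTheory

/-- The `i`-th partial derivative of a function on `ℝ³`. -/
noncomputable def pd (i : Fin 3) (f : (Fin 3 → ℝ) → ℝ) (x : Fin 3 → ℝ) : ℝ :=
  fderiv ℝ f x (Pi.single i 1)

/-- The slope `β₂ = u₂/u₁`. -/
noncomputable def beta2 (u1 u2 : (Fin 3 → ℝ) → ℝ) : (Fin 3 → ℝ) → ℝ :=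
  fun x => u2 x / u1 x

/-- The slope `β₃ = u₃/u₁`. -/
noncomputable def beta3 (u1 u3 : (Fin 3 → ℝ) → ℝ) : (Fin 3 → ℝ) → ℝ :=
  fun x => u3 x / u1 x

/-- The Bernoulli function `B = ½(u₁²+u₂²+u₃²) + h(ρ) − φ`. -/
noncomputable def Bfun (ρ u1 u2 u3 φ : (Fin 3 → ℝ) → ℝ) (h : ℝ → ℝ) :
    (Fin 3 → ℝ) → ℝ :=
  fun x => (1 / 2) * ((u1 x) ^ 2 + (u2 x) ^ 2 + (u3 x) ^ 2) + h (ρ x) - φ x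

/-- `s = ln ρ`. -/
noncomputable def Sfun (ρ : (Fin 3 → ℝ) → ℝ) : (Fin 3 → ℝ) → ℝ :=
  fun x => Real.log (ρ x)

set_option maxHeartbeats 2000000 in
/-- The new formulation of the steady Euler–Poisson system in the variables
`(s, β₂, β₃, B, φ)`. -/
theorem new_formulation
    (Ω : Set (Fin 3 → ℝ)) (hΩ : IsOpen Ω)
    (ρ u1 u2 u3 φ : (Fin 3 → ℝ) → ℝ)
    (p p' h : ℝ → ℝ)
    (hρpos : ∀ x ∈ Ω, 0 < ρ x)
    (hu1pos : ∀ x ∈ Ω, 0 < u1 x)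
    (hρ : ContDiffOn ℝ 1 ρ Ω) (hu1 : ContDiffOn ℝ 1 u1 Ω)
    (hu2 : ContDiffOn ℝ 1 u2 Ω) (hu3 : ContDiffOn ℝ 1 u3 Ω)
    (hφ : ContDiffOn ℝ 1 φ Ω)
    (hpC : ContDiffOn ℝ 1 p (Set.Ioi 0))
    (hp : ∀ r : ℝ, 0 < r → HasDerivAt p (p' r) r)
    (hh : ∀ r : ℝ, 0 < r → HasDerivAt h (p' r / r) r)
    (hcont : ∀ x ∈ Ω,
      pd 0 (fun y => ρ y * u1 y) x + pd 1 (fun y => ρ y * u2 y) x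
        + pd 2 (fun y => ρ y * u3 y) x = 0)
    (hmom1 : ∀ x ∈ Ω,
      pd 0 (fun y => ρ y * u1 y * u1 y) x + pd 1 (fun y => ρ y * u1 y * u2 y) x
        + pd 2 (fun y => ρ y * u1 y * u3 y) x + pd 0 (fun y => p (ρ y)) x
        = ρ x * pd 0 φ x)
    (hmom2 : ∀ x ∈ Ω,
      pd 0 (fun y => ρ y * u2 y * u1 y) x + pd 1 (fun y => ρ y * u2 y * u2 y) x
        + pd 2 (fun y => ρ y * u2 y * u3 y) x + pd 1 (fun y => p (ρ y)) x
        = ρ x * pd 1 φ x)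
    (hmom3 : ∀ x ∈ Ω,
      pd 0 (fun y => ρ y * u3 y * u1 y) x + pd 1 (fun y => ρ y * u3 y * u2 y) x
        + pd 2 (fun y => ρ y * u3 y * u3 y) x + pd 2 (fun y => p (ρ y)) x
        = ρ x * pd 2 φ x) :
    ∀ x ∈ Ω,
      (pd 0 (Sfun ρ) x + beta2 u1 u2 x * pd 1 (Sfun ρ) x + beta3 u1 u3 x * pd 2 (Sfun ρ) x
          - (p' (ρ x) / (u1 x) ^ 2) * pd 0 (Sfun ρ) x
          + pd 1 (beta2 u1 u2) x + pd 2 (beta3 u1 u3) x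
        = -(1 / (u1 x) ^ 2) * pd 0 φ x)
      ∧ (pd 0 (beta2 u1 u2) x + beta2 u1 u2 x * pd 1 (beta2 u1 u2) x
          + beta3 u1 u3 x * pd 2 (beta2 u1 u2) x
          - (p' (ρ x) / (u1 x) ^ 2) * beta2 u1 u2 x * pd 0 (Sfun ρ) x
          + (p' (ρ x) / (u1 x) ^ 2) * pd 1 (Sfun ρ) x
          + (beta2 u1 u2 x / (u1 x) ^ 2) * pd 0 φ x - (1 / (u1 x) ^ 2) * pd 1 φ x = 0)
      ∧ (pd 0 (beta3 u1 u3) x + beta2 u1 u2 x * pd 1 (beta3 u1 u3) x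
          + beta3 u1 u3 x * pd 2 (beta3 u1 u3) x
          - (p' (ρ x) / (u1 x) ^ 2) * beta3 u1 u3 x * pd 0 (Sfun ρ) x
          + (p' (ρ x) / (u1 x) ^ 2) * pd 2 (Sfun ρ) x
          + (beta3 u1 u3 x / (u1 x) ^ 2) * pd 0 φ x - (1 / (u1 x) ^ 2) * pd 2 φ x = 0)
      ∧ (pd 0 (Bfun ρ u1 u2 u3 φ h) x + beta2 u1 u2 x * pd 1 (Bfun ρ u1 u2 u3 φ h) x
          + beta3 u1 u3 x * pd 2 (Bfun ρ u1 u2 u3 φ h) x = 0) := by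
  intro x hx
  have hmem : Ω ∈ nhds x := hΩ.mem_nhds hx
  have hρx := hρpos x hx
  have hux := hu1pos x hx
  have hρne : ρ x ≠ 0 := ne_of_gt hρx
  have hune : u1 x ≠ 0 := ne_of_gt hux
  have hρd : DifferentiableAt ℝ ρ x := ((hρ.differentiableOn one_ne_zero) x hx).differentiableAt hmem
  have hu1d : DifferentiableAt ℝ u1 x := ((hu1.differentiableOn one_ne_zero) x hx).differentiableAt hmem
  have hu2d : DifferentiableAt ℝ u2 x := ((hu2.differentiableOn one_ne_zero) x hx).differentiableAt hmem
  have hu3d : DifferentiableAt ℝ u3 x := ((hu3.differentiableOn one_ne_zero) x hx).differentiableAt hmem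
  have hφd : DifferentiableAt ℝ φ x := ((hφ.differentiableOn one_ne_zero) x hx).differentiableAt hmem
  -- product rule
  have pdmul : ∀ (f g : (Fin 3 → ℝ) → ℝ), DifferentiableAt ℝ f x → DifferentiableAt ℝ g x →
      ∀ i, pd i (fun y => f y * g y) x = pd i f x * g x + f x * pd i g x := by
    intro f g hf hg i
    rw [pd, (hf.hasFDerivAt.fun_mul hg.hasFDerivAt).fderiv]
    simp [pd, smul_eq_mul]; ring
  have pdmul3 : ∀ (f g k : (Fin 3 → ℝ) → ℝ), DifferentiableAt ℝ f x → DifferentiableAt ℝ g x →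
      DifferentiableAt ℝ k x →
      ∀ i, pd i (fun y => f y * g y * k y) x
        = pd i f x * g x * k x + f x * pd i g x * k x + f x * g x * pd i k x := by
    intro f g k hf hg hk i
    rw [pd, ((hf.hasFDerivAt.fun_mul hg.hasFDerivAt).fun_mul hk.hasFDerivAt).fderiv]
    simp [pd, smul_eq_mul]; ring
  have pdcomp : ∀ (g : ℝ → ℝ) (c : ℝ) (f : (Fin 3 → ℝ) → ℝ), HasDerivAt g c (f x) →
      DifferentiableAt ℝ f x → ∀ i, pd i (fun y => g (f y)) x = c * pd i f x := by
    intro g c f hg hf i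
    have h2 : fderiv ℝ (fun y => g (f y)) x = c • fderiv ℝ f x := by
      simpa [Function.comp_def] using (hg.comp_hasFDerivAt x hf.hasFDerivAt).fderiv
    rw [pd, h2]; simp [pd, smul_eq_mul]
  have pddiv : ∀ (f g : (Fin 3 → ℝ) → ℝ), DifferentiableAt ℝ f x → DifferentiableAt ℝ g x →
      g x ≠ 0 → ∀ i, pd i (fun y => f y / g y) x
        = (pd i f x * g x - f x * pd i g x) / (g x) ^ 2 := by
    intro f g hf hg hne i
    have h1 : HasDerivAt (fun t : ℝ => t⁻¹) (-(g x ^ 2)⁻¹) (g x) := hasDerivAt_inv hne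
    have h2 : fderiv ℝ (fun y => (g y)⁻¹) x = (-(g x ^ 2)⁻¹) • fderiv ℝ g x := by
      exact (h1.comp_hasFDerivAt x hg.hasFDerivAt).fderiv
    have hginv : DifferentiableAt ℝ (fun y => (g y)⁻¹) x := hg.inv hne
    have h3 : fderiv ℝ (fun y => f y / g y) x
        = fderiv ℝ (fun y => f y * (g y)⁻¹) x := by
      simp only [div_eq_mul_inv]
    rw [pd, h3, (hf.hasFDerivAt.fun_mul hginv.hasFDerivAt).fderiv]
    simp [pd, h2, smul_eq_mul]
    field_simp
    ring
  -- pd of composite quantities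
  have hpdS : ∀ i, pd i (Sfun ρ) x = (ρ x)⁻¹ * pd i ρ x := fun i =>
    pdcomp Real.log (ρ x)⁻¹ ρ (Real.hasDerivAt_log hρne) hρd i
  have hpdP : ∀ i, pd i (fun y => p (ρ y)) x = p' (ρ x) * pd i ρ x := fun i =>
    pdcomp p (p' (ρ x)) ρ (hp _ hρx) hρd i
  have hpdb2 : ∀ i, pd i (beta2 u1 u2) x
      = (pd i u2 x * u1 x - u2 x * pd i u1 x) / (u1 x) ^ 2 := fun i =>
    pddiv u2 u1 hu2d hu1d hune i
  have hpdb3 : ∀ i, pd i (beta3 u1 u3) x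
      = (pd i u3 x * u1 x - u3 x * pd i u1 x) / (u1 x) ^ 2 := fun i =>
    pddiv u3 u1 hu3d hu1d hune i
  have hsq : ∀ (f : (Fin 3 → ℝ) → ℝ), DifferentiableAt ℝ f x →
      HasFDerivAt (fun y => f y ^ 2) ((2 * f x) • fderiv ℝ f x) x := by
    intro f hf
    have h1 := (hasDerivAt_pow 2 (f x)).comp_hasFDerivAt x hf.hasFDerivAt
    simpa [Function.comp_def, pow_one] using h1
  have hBd : HasFDerivAt (Bfun ρ u1 u2 u3 φ h)
      (((1:ℝ)/2) • (((2 * u1 x) • fderiv ℝ u1 x + (2 * u2 x) • fderiv ℝ u2 x)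
        + (2 * u3 x) • fderiv ℝ u3 x)
        + (p' (ρ x) / ρ x) • fderiv ℝ ρ x - fderiv ℝ φ x) x := by
    have hhρ : HasFDerivAt (fun y => h (ρ y)) ((p' (ρ x) / ρ x) • fderiv ℝ ρ x) x := by
      simpa [Function.comp_def] using (hh (ρ x) hρx).comp_hasFDerivAt x hρd.hasFDerivAt
    exact ((((hsq u1 hu1d).add (hsq u2 hu2d)).add (hsq u3 hu3d)).const_mul ((1:ℝ)/2)).add hhρ |>.sub hφd.hasFDerivAt
  have hpdB : ∀ i, pd i (Bfun ρ u1 u2 u3 φ h) x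
      = u1 x * pd i u1 x + u2 x * pd i u2 x + u3 x * pd i u3 x
        + (p' (ρ x) / ρ x) * pd i ρ x - pd i φ x := by
    intro i
    rw [pd, hBd.fderiv]
    simp [pd, smul_eq_mul]
    ring
  -- rewrite hypotheses into primitive partials
  have hC := hcont x hx
  rw [pdmul ρ u1 hρd hu1d, pdmul ρ u2 hρd hu2d, pdmul ρ u3 hρd hu3d] at hC
  have hM1 := hmom1 x hx
  rw [pdmul3 ρ u1 u1 hρd hu1d hu1d, pdmul3 ρ u1 u2 hρd hu1d hu2d,
    pdmul3 ρ u1 u3 hρd hu1d hu3d, hpdP 0] at hM1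
  have hM2 := hmom2 x hx
  rw [pdmul3 ρ u2 u1 hρd hu2d hu1d, pdmul3 ρ u2 u2 hρd hu2d hu2d,
    pdmul3 ρ u2 u3 hρd hu2d hu3d, hpdP 1] at hM2
  have hM3 := hmom3 x hx
  rw [pdmul3 ρ u3 u1 hρd hu3d hu1d, pdmul3 ρ u3 u2 hρd hu3d hu2d,
    pdmul3 ρ u3 u3 hρd hu3d hu3d, hpdP 2] at hM3
  clear hsq pddiv pdcomp pdmul pdmul3 hpdP hcont hmom1 hmom2 hmom3 hρ hu1 hu2 hu3 hφ hpC hp hh hρpos hu1pos hΩ hmem hx hρx hux hρd hu1d hu2d hu3d hφd hBd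
  set c := p' (ρ x) with hc
  set r := ρ x with hr
  set u := u1 x with hu
  set v := u2 x with hv
  set w := u3 x with hw
  set R0 := pd 0 ρ x with hR0; set R1 := pd 1 ρ x with hR1; set R2 := pd 2 ρ x with hR2
  set A0 := pd 0 u1 x with hA0; set A1 := pd 1 u1 x with hA1; set A2 := pd 2 u1 x with hA2
  set B0 := pd 0 u2 x with hB0; set B1 := pd 1 u2 x with hB1; set B2 := pd 2 u2 x with hB2
  set C0 := pd 0 u3 x with hC0; set C1 := pd 1 u3 x with hC1; set C2 := pd 2 u3 x with hC2
  set F0 := pd 0 φ x with hF0; set F1 := pd 1 φ x with hF1; set F2 := pd 2 φ x with hF2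
  refine ⟨?_, ?_, ?_, ?_⟩
  · rw [hpdS 0, hpdS 1, hpdS 2, hpdb2 1, hpdb3 2]
    simp only [beta2, beta3]
    simp only [← hR0, ← hR1, ← hR2, ← hA0, ← hA1, ← hA2, ← hB0, ← hB1, ← hB2, ← hC0, ← hC1, ← hC2, ← hF0, ← hF1, ← hF2, ← hu, ← hv, ← hw, ← hr, ← hc]
    field_simp
    linear_combination 2*u*hC - hM1
  · rw [hpdb2 0, hpdb2 1, hpdb2 2, hpdS 0, hpdS 1]
    simp only [beta2, beta3]
    simp only [← hR0, ← hR1, ← hR2, ← hA0, ← hA1, ← hA2, ← hB0, ← hB1, ← hB2, ← hC0, ← hC1, ← hC2, ← hF0, ← hF1, ← hF2, ← hu, ← hv, ← hw, ← hr, ← hc]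
    field_simp
    linear_combination u*hM2 - v*hM1
  · rw [hpdb3 0, hpdb3 1, hpdb3 2, hpdS 0, hpdS 2]
    simp only [beta2, beta3]
    simp only [← hR0, ← hR1, ← hR2, ← hA0, ← hA1, ← hA2, ← hB0, ← hB1, ← hB2, ← hC0, ← hC1, ← hC2, ← hF0, ← hF1, ← hF2, ← hu, ← hv, ← hw, ← hr, ← hc]
    field_simp
    linear_combination u*hM3 - w*hM1
  · rw [hpdB 0, hpdB 1, hpdB 2]
    simp only [beta2, beta3]
    simp only [← hR0, ← hR1, ← hR2, ← hA0, ← hA1, ← hA2, ← hB0, ← hB1, ← hB2, ← hC0, ← hC1, ← hC2, ← hF0, ← hF1, ← hF2, ← hu, ← hv, ← hw, ← hr, ← hc]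
    field_simp
    linear_combination u*hM1 + v*hM2 + w*hM3 - (u^2+v^2+w^2)*hC
end

section
/- Let Ω ⊆ ℝ³ be open, u = (u₁,u₂,u₃) : Ω → ℝ³ a C¹ vector field with u₁ ≠ 0 on Ω, and μ : Ω → ℝ a function such that curl u = μ·u on Ω (the vorticity is parallel to the velocity). Set β₂ = u₂/u₁, β₃ = u₃/u₁, G = 1 + β₂² + β₃², and W = ∂₂β₃ − ∂₃β₂ + β₃∂₁β₂ − β₂∂₁β₃. Then W = μ·G on Ω; in particular, for any positive function ρ on Ω, W/(ρG) = μ/ρ. -/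
open Real Set MeasureTheory

/-- `G = 1 + β₂² + β₃²`. -/
noncomputable def Gfun (u1 u2 u3 : (Fin 3 → ℝ) → ℝ) : (Fin 3 → ℝ) → ℝ :=
  fun x => 1 + (beta2 u1 u2 x) ^ 2 + (beta3 u1 u3 x) ^ 2

/-- `W = ∂₂β₃ − ∂₃β₂ + β₃∂₁β₂ − β₂∂₁β₃`. -/
noncomputable def Wfun (u1 u2 u3 : (Fin 3 → ℝ) → ℝ) : (Fin 3 → ℝ) → ℝ :=
  fun x => pd 1 (beta3 u1 u3) x - pd 2 (beta2 u1 u2) x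
    + beta3 u1 u3 x * pd 0 (beta2 u1 u2) x - beta2 u1 u2 x * pd 0 (beta3 u1 u3) x

lemma pd_div (i : Fin 3) (f g : (Fin 3 → ℝ) → ℝ) (x : Fin 3 → ℝ)
    (hf : DifferentiableAt ℝ f x) (hg : DifferentiableAt ℝ g x) (hx : g x ≠ 0) :
    pd i (fun y => f y / g y) x = (pd i f x * g x - f x * pd i g x) / (g x)^2 := by
  have h1 : HasFDerivAt (fun y => f y * (g y)⁻¹)
      (f x • ((-ContinuousLinearMap.mulLeftRight ℝ ℝ (g x)⁻¹ (g x)⁻¹).comp (fderiv ℝ g x))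
        + (g x)⁻¹ • fderiv ℝ f x) x :=
    hf.hasFDerivAt.mul ((hasFDerivAt_inv' hx).comp x hg.hasFDerivAt)
  have h2 : pd i (fun y => f y / g y) x
      = (f x • ((-ContinuousLinearMap.mulLeftRight ℝ ℝ (g x)⁻¹ (g x)⁻¹).comp (fderiv ℝ g x))
        + (g x)⁻¹ • fderiv ℝ f x) (Pi.single i 1) := by
    simp only [pd, div_eq_mul_inv]
    rw [h1.fderiv]
  rw [h2]
  simp only [ContinuousLinearMap.add_apply, ContinuousLinearMap.smul_apply,
    ContinuousLinearMap.comp_apply, ContinuousLinearMap.neg_apply,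
    ContinuousLinearMap.mulLeftRight_apply, smul_eq_mul, pd]
  field_simp
  ring

/-- For a Beltrami field (`curl u = μ u`) with `u₁ ≠ 0` one has `W = μ G`; in particular
`W/(ρG) = μ/ρ` for any positive function `ρ`. -/
theorem beltrami_W_eq_mu_G
    (Ω : Set (Fin 3 → ℝ)) (hΩ : IsOpen Ω)
    (u1 u2 u3 μ : (Fin 3 → ℝ) → ℝ)
    (hu1 : ContDiffOn ℝ 1 u1 Ω) (hu2 : ContDiffOn ℝ 1 u2 Ω) (hu3 : ContDiffOn ℝ 1 u3 Ω)
    (hu1ne : ∀ x ∈ Ω, u1 x ≠ 0)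
    (hcurl : ∀ x ∈ Ω,
      pd 1 u3 x - pd 2 u2 x = μ x * u1 x
        ∧ pd 2 u1 x - pd 0 u3 x = μ x * u2 x
        ∧ pd 0 u2 x - pd 1 u1 x = μ x * u3 x) :
    (∀ x ∈ Ω, Wfun u1 u2 u3 x = μ x * Gfun u1 u2 u3 x)
      ∧ ∀ ρ : (Fin 3 → ℝ) → ℝ, (∀ x ∈ Ω, 0 < ρ x) →
          ∀ x ∈ Ω, Wfun u1 u2 u3 x / (ρ x * Gfun u1 u2 u3 x) = μ x / ρ x := by
  have key : ∀ x ∈ Ω, Wfun u1 u2 u3 x = μ x * Gfun u1 u2 u3 x := by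
    intro x hx
    have hd1 : DifferentiableAt ℝ u1 x :=
      (hu1.contDiffAt (hΩ.mem_nhds hx)).differentiableAt one_ne_zero
    have hd2 : DifferentiableAt ℝ u2 x :=
      (hu2.contDiffAt (hΩ.mem_nhds hx)).differentiableAt one_ne_zero
    have hd3 : DifferentiableAt ℝ u3 x :=
      (hu3.contDiffAt (hΩ.mem_nhds hx)).differentiableAt one_ne_zero
    have hne := hu1ne x hx
    have e2 : ∀ i, pd i (beta2 u1 u2) x
        = (pd i u2 x * u1 x - u2 x * pd i u1 x) / (u1 x)^2 :=
      fun i => pd_div i u2 u1 x hd2 hd1 hne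
    have e3 : ∀ i, pd i (beta3 u1 u3) x
        = (pd i u3 x * u1 x - u3 x * pd i u1 x) / (u1 x)^2 :=
      fun i => pd_div i u3 u1 x hd3 hd1 hne
    obtain ⟨h1, h2, h3⟩ := hcurl x hx
    have k1 : pd 1 u3 x = μ x * u1 x + pd 2 u2 x := by linarith
    have k2 : pd 2 u1 x = μ x * u2 x + pd 0 u3 x := by linarith
    have k3 : pd 0 u2 x = μ x * u3 x + pd 1 u1 x := by linarith
    simp only [Wfun, Gfun, beta2, beta3, e2, e3]
    rw [k1, k2, k3]
    field_simp
    ring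
  refine ⟨key, fun ρ hρ x hx => ?_⟩
  have hG : Gfun u1 u2 u3 x ≠ 0 := by
    have : (0:ℝ) < 1 + (beta2 u1 u2 x) ^ 2 + (beta3 u1 u3 x) ^ 2 := by positivity
    simpa [Gfun] using this.ne'
  have hρx := (hρ x hx).ne'
  rw [key x hx]
  field_simp
end

section
/- Let Ω ⊆ ℝ³ be open, and let ρ : Ω → ℝ with ρ > 0, u = (u₁,u₂,u₃) : Ω → ℝ³ with u₁ > 0, and φ : Ω → ℝ be C² functions satisfying the steady Euler–Poisson continuity equation ∂₁(ρu₁)+∂₂(ρu₂)+∂₃(ρu₃) = 0 and momentum equations ∂₁(ρu_iu₁)+∂₂(ρu_iu₂)+∂₃(ρu_iu₃)+∂_i(p(ρ)) = ρ∂_iφ for i = 1,2,3. Assume the Bernoulli function B = ½(u₁²+u₂²+u₃²) + h(ρ) − φ is constant on Ω and that there is a C¹ function μ : Ω → ℝ with curl u = μ·u on Ω. Then ∂₁(μ/ρ) + (u₂/u₁)∂₂(μ/ρ) + (u₃/u₁)∂₃(μ/ρ) = 0 on Ω, i.e. μ/ρ is conserved along the particle paths. -/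
open Real Set MeasureTheory

lemma pd_congr {Ω : Set (Fin 3 → ℝ)} (hΩ : IsOpen Ω) {x} (hx : x ∈ Ω)
    {f g : (Fin 3 → ℝ) → ℝ} (hfg : ∀ y ∈ Ω, f y = g y) (i : Fin 3) :
    pd i f x = pd i g x := by
  unfold pd
  rw [Filter.EventuallyEq.fderiv_eq (Filter.eventuallyEq_of_mem (hΩ.mem_nhds hx) hfg)]

lemma pd_mul {f g : (Fin 3 → ℝ) → ℝ} {x} (hf : DifferentiableAt ℝ f x)
    (hg : DifferentiableAt ℝ g x) (i : Fin 3) :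
    pd i (fun y => f y * g y) x = pd i f x * g x + f x * pd i g x := by
  unfold pd
  rw [fderiv_fun_mul hf hg]
  simp
  ring

lemma pd_sub {f g : (Fin 3 → ℝ) → ℝ} {x} (hf : DifferentiableAt ℝ f x)
    (hg : DifferentiableAt ℝ g x) (i : Fin 3) :
    pd i (fun y => f y - g y) x = pd i f x - pd i g x := by
  unfold pd
  rw [fderiv_fun_sub hf hg]
  simp

lemma pd_diff {f : (Fin 3 → ℝ) → ℝ} {x} (hf : ContDiffAt ℝ 2 f x) (j : Fin 3) :
    DifferentiableAt ℝ (fun y => pd j f y) x := by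
  have hd : ContDiffAt ℝ 1 (fderiv ℝ f) x := hf.fderiv_right (by norm_num)
  exact (hd.differentiableAt (by norm_num)).clm_apply (differentiableAt_const _)

lemma pd_comm {f : (Fin 3 → ℝ) → ℝ} {x} (hf : ContDiffAt ℝ 2 f x) (i j : Fin 3) :
    pd i (fun y => pd j f y) x = pd j (fun y => pd i f y) x := by
  have hd : DifferentiableAt ℝ (fderiv ℝ f) x :=
    (hf.fderiv_right (m := 1) (by norm_num)).differentiableAt (by norm_num)
  have key : ∀ v w : Fin 3 → ℝ,
      fderiv ℝ (fun y => fderiv ℝ f y v) x w = fderiv ℝ (fderiv ℝ f) x w v := by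
    intro v w
    rw [fderiv_clm_apply hd (differentiableAt_const v)]
    simp
  unfold pd
  rw [key, key]
  exact (hf.isSymmSndFDerivAt (by norm_num)).eq _ _

/-- For a Beltrami solution (`curl u = μ u`) of the steady Euler–Poisson system with
constant Bernoulli function, `μ/ρ` is conserved along particle paths. -/
theorem mu_over_rho_conserved
    (Ω : Set (Fin 3 → ℝ)) (hΩ : IsOpen Ω)
    (ρ u1 u2 u3 φ : (Fin 3 → ℝ) → ℝ)
    (p p' h : ℝ → ℝ)
    (hρpos : ∀ x ∈ Ω, 0 < ρ x)
    (hu1pos : ∀ x ∈ Ω, 0 < u1 x)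
    (hρ : ContDiffOn ℝ 2 ρ Ω) (hu1 : ContDiffOn ℝ 2 u1 Ω)
    (hu2 : ContDiffOn ℝ 2 u2 Ω) (hu3 : ContDiffOn ℝ 2 u3 Ω)
    (hφ : ContDiffOn ℝ 2 φ Ω)
    (hpC : ContDiffOn ℝ 2 p (Set.Ioi 0))
    (hp : ∀ r : ℝ, 0 < r → HasDerivAt p (p' r) r)
    (hh : ∀ r : ℝ, 0 < r → HasDerivAt h (p' r / r) r)
    (hcont : ∀ x ∈ Ω,
      pd 0 (fun y => ρ y * u1 y) x + pd 1 (fun y => ρ y * u2 y) x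
        + pd 2 (fun y => ρ y * u3 y) x = 0)
    (hmom1 : ∀ x ∈ Ω,
      pd 0 (fun y => ρ y * u1 y * u1 y) x + pd 1 (fun y => ρ y * u1 y * u2 y) x
        + pd 2 (fun y => ρ y * u1 y * u3 y) x + pd 0 (fun y => p (ρ y)) x
        = ρ x * pd 0 φ x)
    (hmom2 : ∀ x ∈ Ω,
      pd 0 (fun y => ρ y * u2 y * u1 y) x + pd 1 (fun y => ρ y * u2 y * u2 y) x
        + pd 2 (fun y => ρ y * u2 y * u3 y) x + pd 1 (fun y => p (ρ y)) x
        = ρ x * pd 1 φ x)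
    (hmom3 : ∀ x ∈ Ω,
      pd 0 (fun y => ρ y * u3 y * u1 y) x + pd 1 (fun y => ρ y * u3 y * u2 y) x
        + pd 2 (fun y => ρ y * u3 y * u3 y) x + pd 2 (fun y => p (ρ y)) x
        = ρ x * pd 2 φ x)
    (hBconst : ∀ x ∈ Ω, ∀ y ∈ Ω, Bfun ρ u1 u2 u3 φ h x = Bfun ρ u1 u2 u3 φ h y)
    (μ : (Fin 3 → ℝ) → ℝ) (hμ : ContDiffOn ℝ 1 μ Ω)
    (hcurl : ∀ x ∈ Ω,
      pd 1 u3 x - pd 2 u2 x = μ x * u1 x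
        ∧ pd 2 u1 x - pd 0 u3 x = μ x * u2 x
        ∧ pd 0 u2 x - pd 1 u1 x = μ x * u3 x) :
    ∀ x ∈ Ω,
      pd 0 (fun y => μ y / ρ y) x + (u2 x / u1 x) * pd 1 (fun y => μ y / ρ y) x
        + (u3 x / u1 x) * pd 2 (fun y => μ y / ρ y) x = 0 := by
  intro x hx
  have hρne : ρ x ≠ 0 := (hρpos x hx).ne'
  have hu1ne : u1 x ≠ 0 := (hu1pos x hx).ne'
  have hmx := hΩ.mem_nhds hx
  -- differentiability at x
  have cρ : ContDiffAt ℝ 2 ρ x := hρ.contDiffAt hmx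
  have cu1 : ContDiffAt ℝ 2 u1 x := hu1.contDiffAt hmx
  have cu2 : ContDiffAt ℝ 2 u2 x := hu2.contDiffAt hmx
  have cu3 : ContDiffAt ℝ 2 u3 x := hu3.contDiffAt hmx
  have dρ : DifferentiableAt ℝ ρ x := cρ.differentiableAt (by norm_num)
  have du1 : DifferentiableAt ℝ u1 x := cu1.differentiableAt (by norm_num)
  have du2 : DifferentiableAt ℝ u2 x := cu2.differentiableAt (by norm_num)
  have du3 : DifferentiableAt ℝ u3 x := cu3.differentiableAt (by norm_num)
  have dμ : DifferentiableAt ℝ μ x := (hμ.contDiffAt hmx).differentiableAt (by norm_num)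
  -- f = μ/ρ is differentiable at x
  have df : DifferentiableAt ℝ (fun y => μ y / ρ y) x := by
    have : DifferentiableAt ℝ (fun y => μ y * (ρ y)⁻¹) x := dμ.mul (dρ.inv hρne)
    simpa [div_eq_mul_inv] using this
  set f : (Fin 3 → ℝ) → ℝ := fun y => μ y / ρ y with hf
  -- μ = f * ρ on Ω
  have hfρ : ∀ y ∈ Ω, μ y = f y * ρ y := by
    intro y hy
    show μ y = μ y / ρ y * ρ y
    exact (div_mul_cancel₀ _ (hρpos y hy).ne').symm
  have hE : ∀ i : Fin 3, pd i μ x = pd i f x * ρ x + f x * pd i ρ x := by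
    intro i
    rw [pd_congr hΩ hx hfρ i, pd_mul df dρ]
  -- expand continuity
  have ec : pd 0 ρ x * u1 x + ρ x * pd 0 u1 x + pd 1 ρ x * u2 x + ρ x * pd 1 u2 x
      + pd 2 ρ x * u3 x + ρ x * pd 2 u3 x = 0 := by
    have := hcont x hx
    rw [pd_mul dρ du1, pd_mul dρ du2, pd_mul dρ du3] at this
    linarith
  -- divergence of curl is zero, so div (μ u) = 0
  have hc1 : pd 0 (fun y => μ y * u1 y) x
      = pd 0 (fun y => pd 1 u3 y) x - pd 0 (fun y => pd 2 u2 y) x := by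
    rw [pd_congr hΩ hx (fun y hy => ((hcurl y hy).1).symm) 0,
      pd_sub (pd_diff cu3 1) (pd_diff cu2 2)]
  have hc2 : pd 1 (fun y => μ y * u2 y) x
      = pd 1 (fun y => pd 2 u1 y) x - pd 1 (fun y => pd 0 u3 y) x := by
    rw [pd_congr hΩ hx (fun y hy => ((hcurl y hy).2.1).symm) 1,
      pd_sub (pd_diff cu1 2) (pd_diff cu3 0)]
  have hc3 : pd 2 (fun y => μ y * u3 y) x
      = pd 2 (fun y => pd 0 u2 y) x - pd 2 (fun y => pd 1 u1 y) x := by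
    rw [pd_congr hΩ hx (fun y hy => ((hcurl y hy).2.2).symm) 2,
      pd_sub (pd_diff cu2 0) (pd_diff cu1 1)]
  have ediv : pd 0 (fun y => μ y * u1 y) x + pd 1 (fun y => μ y * u2 y) x
      + pd 2 (fun y => μ y * u3 y) x = 0 := by
    rw [hc1, hc2, hc3, pd_comm cu3 0 1, pd_comm cu2 0 2, pd_comm cu1 1 2]
    ring
  have eμ : pd 0 μ x * u1 x + μ x * pd 0 u1 x + pd 1 μ x * u2 x + μ x * pd 1 u2 x
      + pd 2 μ x * u3 x + μ x * pd 2 u3 x = 0 := by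
    rw [pd_mul dμ du1, pd_mul dμ du2, pd_mul dμ du3] at ediv
    linarith
  -- combine
  have E0 := hE 0; have E1 := hE 1; have E2 := hE 2
  have hfx : f x = μ x / ρ x := rfl
  have ha : ∀ i : Fin 3, pd i f x = (pd i μ x - f x * pd i ρ x) / ρ x := by
    intro i
    field_simp
    linarith [hE i]
  have key : pd 0 f x * u1 x + pd 1 f x * u2 x + pd 2 f x * u3 x = 0 := by
    rw [ha 0, ha 1, ha 2, hfx]
    field_simp
    linear_combination ρ x * eμ - μ x * ec
  have hdiv : pd 0 f x + u2 x / u1 x * pd 1 f x + u3 x / u1 x * pd 2 f x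
      = (pd 0 f x * u1 x + pd 1 f x * u2 x + pd 2 f x * u3 x) / u1 x := by
    field_simp
  show pd 0 f x + u2 x / u1 x * pd 1 f x + u3 x / u1 x * pd 2 f x = 0
  rw [hdiv, key, zero_div]
end

section
/- Let I ⊆ ℝ be an interval, b₀, J ∈ ℝ, and let p : (0,∞) → ℝ be C¹. Suppose ρ : I → ℝ and E : I → ℝ are differentiable with ρ > 0 on I, and satisfy the one-dimensional steady Euler–Poisson system: (d/dx)(p(ρ(x)) + J²/ρ(x)) = ρ(x)E(x) and E'(x) = ρ(x) − b₀ for all x ∈ I. Let H : (0,∞) → ℝ be any differentiable function with H'(r) = ((r − b₀)/r)·(p'(r) − J²/r²) for all r > 0. Then the function x ↦ ½E(x)² − H(ρ(x)) is constant on I. -/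
open Real Set MeasureTheory Topology

/-- Trajectory invariant in the `(ρ,E)`-phase plane for the 1-D steady Euler–Poisson
system: `½E² − H(ρ)` is constant along solutions. -/
theorem phase_plane_invariant
    (I : Set ℝ) (hI : I.OrdConnected)
    (b₀ J : ℝ) (p p' H : ℝ → ℝ)
    (hpC : ContDiffOn ℝ 1 p (Set.Ioi 0))
    (hp : ∀ r : ℝ, 0 < r → HasDerivAt p (p' r) r)
    (ρ E : ℝ → ℝ)
    (hρpos : ∀ x ∈ I, 0 < ρ x)
    (hρdiff : ∀ x ∈ I, DifferentiableWithinAt ℝ ρ I x)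
    (hEdiff : ∀ x ∈ I, DifferentiableWithinAt ℝ E I x)
    (hmom : ∀ x ∈ I,
      HasDerivWithinAt (fun y => p (ρ y) + J ^ 2 / ρ y) (ρ x * E x) I x)
    (hE : ∀ x ∈ I, HasDerivWithinAt E (ρ x - b₀) I x)
    (hH : ∀ r : ℝ, 0 < r →
      HasDerivAt H ((r - b₀) / r * (p' r - J ^ 2 / r ^ 2)) r) :
    ∀ x ∈ I, ∀ y ∈ I,
      (1 / 2) * (E x) ^ 2 - H (ρ x) = (1 / 2) * (E y) ^ 2 - H (ρ y) := by
  have hconv : Convex ℝ I := convex_iff_ordConnected.2 hI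
  set F : ℝ → ℝ := fun y => (1 / 2) * (E y) ^ 2 - H (ρ y) with hF
  have key : ∀ x ∈ I, HasDerivWithinAt F 0 I x := by
    intro x hx
    by_cases hbot : 𝓝[I \ {x}] x = ⊥
    · rw [hasDerivWithinAt_iff_hasFDerivWithinAt]
      exact HasFDerivWithinAt.of_not_accPt (by rw [accPt_principal_iff_nhdsWithin, hbot]; exact fun h => h.ne rfl)
    · -- x is an accumulation point of I
      have hne : (𝓝[I \ {x}] x).NeBot := ⟨hbot⟩
      obtain ⟨y, hy⟩ : ∃ y, y ∈ I \ {x} := by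
        rcases (Filter.nonempty_of_mem (self_mem_nhdsWithin (a := x) (s := I \ {x}))) with ⟨y, hy⟩
        exact ⟨y, hy⟩
      have hxy : y ≠ x := hy.2
      have hIy : y ∈ I := hy.1
      have hint : (interior I).Nonempty := by
        rcases lt_or_gt_of_ne hxy with h | h
        · refine ⟨(y + x) / 2, ?_⟩
          have : Ioo y x ⊆ interior I :=
            interior_maximal (fun z hz => hI.out hIy hx ⟨hz.1.le, hz.2.le⟩) isOpen_Ioo
          exact this ⟨by linarith, by linarith⟩
        · refine ⟨(y + x) / 2, ?_⟩
          have : Ioo x y ⊆ interior I :=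
            interior_maximal (fun z hz => hI.out hx hIy ⟨hz.1.le, hz.2.le⟩) isOpen_Ioo
          exact this ⟨by linarith, by linarith⟩
      have hud : UniqueDiffWithinAt ℝ I x :=
        uniqueDiffWithinAt_convex hconv hint (subset_closure hx)
      -- set up derivatives
      set r := ρ x with hr
      have hrpos : 0 < r := hρpos x hx
      have hrne : r ≠ 0 := ne_of_gt hrpos
      set d := derivWithin ρ I x with hd
      have hρ' : HasDerivWithinAt ρ d I x := (hρdiff x hx).hasDerivWithinAt
      -- derivative of q(r) = p r + J^2 / r at r
      have hq : HasDerivAt (fun s : ℝ => p s + J ^ 2 / s) (p' r - J ^ 2 / r ^ 2) r := by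
        have h1 : HasDerivAt (fun s : ℝ => J ^ 2 / s) (J ^ 2 * -(r ^ 2)⁻¹) r := by
          simpa [div_eq_mul_inv] using (hasDerivAt_inv hrne).const_mul (J ^ 2)
        have := (hp r hrpos).add h1
        refine this.congr_deriv ?_
        ring
      have hq2 : HasDerivWithinAt (fun y => p (ρ y) + J ^ 2 / ρ y)
          ((p' r - J ^ 2 / r ^ 2) * d) I x := hq.comp_hasDerivWithinAt x hρ'
      have huniq : (p' r - J ^ 2 / r ^ 2) * d = ρ x * E x :=
        hud.eq_deriv _ hq2 (hmom x hx)
      -- derivative of H ∘ ρ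
      have hHρ : HasDerivWithinAt (fun y => H (ρ y))
          (((r - b₀) / r * (p' r - J ^ 2 / r ^ 2)) * d) I x :=
        (hH r hrpos).comp_hasDerivWithinAt x hρ'
      have hval : ((r - b₀) / r * (p' r - J ^ 2 / r ^ 2)) * d = (r - b₀) * E x :=
        calc ((r - b₀) / r * (p' r - J ^ 2 / r ^ 2)) * d
            = (r - b₀) / r * ((p' r - J ^ 2 / r ^ 2) * d) := by ring
          _ = (r - b₀) / r * (r * E x) := by rw [huniq]
          _ = (r - b₀) * E x := by field_simp
      rw [hval] at hHρ
      -- derivative of ½ E²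
      have hE2 : HasDerivWithinAt (fun y => (1 / 2) * (E y) ^ 2)
          ((1 / 2) * (2 * E x * (ρ x - b₀))) I x := by
        have := ((hE x hx).pow 2).const_mul (1 / 2 : ℝ)
        refine this.congr_deriv ?_
        push_cast
        ring
      have := hE2.sub hHρ
      refine this.congr_deriv ?_
      rw [hr]
      ring
  intro x hx y hy
  have h := hconv.norm_image_sub_le_of_norm_hasDerivWithin_le
    (f := F) (f' := fun _ => 0) (C := 0) key (fun z hz => by simp) hy hx
  have : F x - F y = 0 := norm_le_zero_iff.1 (by simpa using h)
  have := sub_eq_zero.1 this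
  simpa [F] using this
end
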